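/- Let φ : R → P and ψ : P → R be homomorphisms of abelian groups with ψ ∘ φ = n·id_R, and suppose Ker φ ≅ G_n and Coker φ ≅ G/n for an abelian group G (n-torsion and mod-n quotient). Then there is an exact sequence 0 → G(n) → Ker ψ → G/n → R/nR → Coker ψ → 0, where G(n) = Coker(G_n ↪ R_n). -/
import Mathlib


/-- Abstract form of Lemma 4.2: for `φ : R → P` with `Ker φ ≅ G_n`,
`Coker φ ≅ G/n` (via `eC`), and `ψ : P → R` with `ψ∘φ = n`, there is an exact
sequence `0 → G(n) → Ker ψ → G/n → R/nR → Coker ψ → 0`, where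
`G(n) = R_n/Ker φ` (with `Ker φ ≅ G_n` sitting inside the `n`-torsion `R_n`). -/
theorem stmt11 {G R P : Type*} [AddCommGroup G] [AddCommGroup R] [AddCommGroup P]
    (n : ℕ) (hn : 1 ≤ n) (φ : R →+ P) (ψ : P →+ R)
    (hψφ : ∀ r : R, ψ (φ r) = n • r)
    (eK : φ.ker ≃+ (zsmulAddGroupHom (n : ℤ) : G →+ G).ker)
    (eC : (P ⧸ φ.range) ≃+ (G ⧸ (zsmulAddGroupHom (n : ℤ) : G →+ G).range)) :
    ∃ (e₁ : ((zsmulAddGroupHom (n : ℤ) : R →+ R).ker ⧸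
          (φ.ker.addSubgroupOf (zsmulAddGroupHom (n : ℤ) : R →+ R).ker)) →+ ψ.ker)
      (e₂ : ψ.ker →+ (G ⧸ (zsmulAddGroupHom (n : ℤ) : G →+ G).range))
      (e₃ : (G ⧸ (zsmulAddGroupHom (n : ℤ) : G →+ G).range) →+
          (R ⧸ (zsmulAddGroupHom (n : ℤ) : R →+ R).range))
      (e₄ : (R ⧸ (zsmulAddGroupHom (n : ℤ) : R →+ R).range) →+ (R ⧸ ψ.range)),
      (∀ x : (zsmulAddGroupHom (n : ℤ) : R →+ R).ker,
        ((e₁ (QuotientAddGroup.mk x)) : P) = φ (x : R)) ∧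
      (∀ p : ψ.ker, e₂ p = eC (QuotientAddGroup.mk (p : P))) ∧
      (∀ p : P, e₃ (eC (QuotientAddGroup.mk p)) = QuotientAddGroup.mk (ψ p)) ∧
      (∀ r : R, e₄ (QuotientAddGroup.mk r) = QuotientAddGroup.mk r) ∧
      Function.Injective e₁ ∧ Function.Exact e₁ e₂ ∧ Function.Exact e₂ e₃ ∧
      Function.Exact e₃ e₄ ∧ Function.Surjective e₄ := by
  have hnR : ∀ r : R, ψ (φ r) = (n : ℤ) • r := fun r => by
    rw [hψφ, natCast_zsmul]
  -- the map R_n/(ker φ ∩ R_n) → ker ψ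
  let f : ((zsmulAddGroupHom (n : ℤ) : R →+ R).ker) →+ ψ.ker :=
    { toFun := fun x => ⟨φ x, by
        have hx : (n : ℤ) • (x : R) = 0 := x.2
        simp only [AddMonoidHom.mem_ker, hnR, hx]⟩
      map_zero' := by ext; simp
      map_add' := fun a b => by ext; simp }
  let e₁ : ((zsmulAddGroupHom (n : ℤ) : R →+ R).ker ⧸
      (φ.ker.addSubgroupOf (zsmulAddGroupHom (n : ℤ) : R →+ R).ker)) →+ ψ.ker :=
    QuotientAddGroup.lift _ f (by
      intro x hx
      have hx' : φ (x : R) = 0 := hx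
      ext
      show φ (x : R) = 0
      exact hx')
  have h1 : ∀ x : (zsmulAddGroupHom (n : ℤ) : R →+ R).ker,
      ((e₁ (QuotientAddGroup.mk x)) : P) = φ (x : R) := fun x => rfl
  -- the map ker ψ → G/n
  let e₂ : ψ.ker →+ (G ⧸ (zsmulAddGroupHom (n : ℤ) : G →+ G).range) :=
    eC.toAddMonoidHom.comp ((QuotientAddGroup.mk' φ.range).comp ψ.ker.subtype)
  have h2 : ∀ p : ψ.ker, e₂ p = eC (QuotientAddGroup.mk (p : P)) := fun p => rfl
  -- the map G/n → R/nR
  let l3 : (P ⧸ φ.range) →+ (R ⧸ (zsmulAddGroupHom (n : ℤ) : R →+ R).range) :=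
    QuotientAddGroup.lift _ ((QuotientAddGroup.mk' _).comp ψ) (by
      rintro p ⟨r, rfl⟩
      show (QuotientAddGroup.mk (ψ (φ r)) : R ⧸ (zsmulAddGroupHom (n : ℤ) : R →+ R).range) = 0
      rw [QuotientAddGroup.eq_zero_iff]
      exact ⟨r, (hnR r).symm⟩)
  let e₃ : (G ⧸ (zsmulAddGroupHom (n : ℤ) : G →+ G).range) →+
      (R ⧸ (zsmulAddGroupHom (n : ℤ) : R →+ R).range) :=
    l3.comp eC.symm.toAddMonoidHom
  have h3 : ∀ p : P, e₃ (eC (QuotientAddGroup.mk p)) = QuotientAddGroup.mk (ψ p) := by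
    intro p
    show l3 (eC.symm (eC _)) = _
    rw [AddEquiv.symm_apply_apply]
    rfl
  -- the map R/nR → R/ψ.range
  let e₄ : (R ⧸ (zsmulAddGroupHom (n : ℤ) : R →+ R).range) →+ (R ⧸ ψ.range) :=
    QuotientAddGroup.map _ _ (AddMonoidHom.id R) (by
      rintro r ⟨s, rfl⟩
      exact ⟨φ s, hnR s⟩)
  have h4 : ∀ r : R, e₄ (QuotientAddGroup.mk r) = QuotientAddGroup.mk r := fun r => rfl
  refine ⟨e₁, e₂, e₃, e₄, h1, h2, h3, h4, ?_, ?_, ?_, ?_, ?_⟩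
  · -- e₁ injective
    rw [injective_iff_map_eq_zero]
    intro q hq
    induction q using QuotientAddGroup.induction_on with
    | H x =>
      have hx : φ (x : R) = 0 := by
        rw [← h1 x, hq]; rfl
      rw [QuotientAddGroup.eq_zero_iff]
      exact hx
  · -- exact e₁ e₂
    intro p
    constructor
    · intro hp
      have hp' : (QuotientAddGroup.mk (p : P) : P ⧸ φ.range) = 0 := by
        apply eC.injective
        rw [← h2 p, hp, map_zero]
      obtain ⟨r, hr⟩ := (QuotientAddGroup.eq_zero_iff _).mp hp'
      have hrn : (zsmulAddGroupHom (n : ℤ) : R →+ R) r = 0 := by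
        show (n : ℤ) • r = 0
        rw [← hnR, hr]
        exact p.2
      refine ⟨QuotientAddGroup.mk ⟨r, hrn⟩, ?_⟩
      exact Subtype.ext (by rw [h1]; exact hr)
    · rintro ⟨q, rfl⟩
      induction q using QuotientAddGroup.induction_on with
      | H x =>
        rw [h2, h1 x]
        have : (QuotientAddGroup.mk (φ (x : R)) : P ⧸ φ.range) = 0 :=
          (QuotientAddGroup.eq_zero_iff _).mpr ⟨x, rfl⟩
        rw [this, map_zero]
  · -- exact e₂ e₃
    intro c
    constructor
    · intro hc
      obtain ⟨q, hq⟩ := eC.surjective c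
      induction q using QuotientAddGroup.induction_on with
      | H p =>
        rw [← hq, h3, QuotientAddGroup.eq_zero_iff] at hc
        obtain ⟨r, hr⟩ := hc
        have hr' : (n : ℤ) • r = ψ p := hr
        have hker : ψ (p - φ r) = 0 := by
          rw [map_sub, hnR, hr', sub_self]
        refine ⟨⟨p - φ r, hker⟩, ?_⟩
        rw [h2, ← hq]
        congr 1
        have h0 : (QuotientAddGroup.mk (φ r) : P ⧸ φ.range) = 0 :=
          (QuotientAddGroup.eq_zero_iff _).mpr ⟨r, rfl⟩
        calc (QuotientAddGroup.mk (p - φ r) : P ⧸ φ.range)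
            = QuotientAddGroup.mk p - QuotientAddGroup.mk (φ r) := by
              rw [QuotientAddGroup.mk_sub]
          _ = QuotientAddGroup.mk p := by rw [h0, sub_zero]
    · rintro ⟨p, rfl⟩
      rw [h2, h3, p.2]
      exact (QuotientAddGroup.eq_zero_iff _).mpr ⟨0, by simp⟩
  · -- exact e₃ e₄
    intro q
    constructor
    · intro hq
      induction q using QuotientAddGroup.induction_on with
      | H r =>
        rw [h4, QuotientAddGroup.eq_zero_iff] at hq
        obtain ⟨p, hp⟩ := hq
        exact ⟨eC (QuotientAddGroup.mk p), by rw [h3, hp]⟩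
    · rintro ⟨c, rfl⟩
      obtain ⟨q, hq⟩ := eC.surjective c
      induction q using QuotientAddGroup.induction_on with
      | H p =>
        rw [← hq, h3, h4, QuotientAddGroup.eq_zero_iff]
        exact ⟨p, rfl⟩
  · -- e₄ surjective
    intro q
    induction q using QuotientAddGroup.induction_on with
    | H r => exact ⟨QuotientAddGroup.mk r, h4 r⟩
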